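/- arXiv:0907.3527 — 3 statements merged into one kernel-verified Lean document; each statement's English description precedes it below -/
import Mathlib

section
/- Let K be a field, n a natural number, G an invertible symmetric n×n matrix over K, and A an n×n matrix over K satisfying Aᵀ * G * A = G. Then (det A)² = 1, the constant coefficient of charpoly(A) equals (−1)ⁿ · det A, and the reversed polynomial satisfies reverse(charpoly(A)) = ((−1)ⁿ · det A) · charpoly(A); that is, the characteristic polynomial of A is palindromic up to the sign (−1)ⁿ · det A. -/
open Polynomial Matrix

lemma charmatrix_transpose' {K : Type*} [CommRing K] {n : ℕ}
    (M : Matrix (Fin n) (Fin n) K) : charmatrix Mᵀ = (charmatrix M)ᵀ := by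
  ext i j
  rcases eq_or_ne i j with rfl | h
  · simp [charmatrix_apply_eq]
  · simp [charmatrix_apply_ne _ _ _ h, charmatrix_apply_ne _ _ _ (Ne.symm h)]

lemma charpoly_transpose' {K : Type*} [CommRing K] {n : ℕ}
    (M : Matrix (Fin n) (Fin n) K) : Mᵀ.charpoly = M.charpoly := by
  rw [Matrix.charpoly, charmatrix_transpose', det_transpose, Matrix.charpoly]

/-- If `A` preserves a nondegenerate symmetric bilinear form with Gram matrix `G`,
then `(det A)² = 1`, the constant coefficient of `charpoly A` is `(-1)^n * det A`,
and `charpoly A` is palindromic up to the sign `(-1)^n * det A`. -/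
theorem charpoly_palindromic_of_preserves_form
    {K : Type*} [Field K] {n : ℕ}
    (G A : Matrix (Fin n) (Fin n) K)
    (hG : IsUnit G) (hGsymm : Gᵀ = G)
    (hA : Aᵀ * G * A = G) :
    A.det ^ 2 = 1 ∧
    A.charpoly.coeff 0 = (-1) ^ n * A.det ∧
    A.charpoly.reverse = Polynomial.C ((-1) ^ n * A.det) * A.charpoly := by
  have hGdet : G.det ≠ 0 := by
    have := (Matrix.isUnit_iff_isUnit_det G).mp hG
    exact this.ne_zero
  have hdet2 : A.det ^ 2 = 1 := by
    have h := congrArg Matrix.det hA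
    rw [Matrix.det_mul, Matrix.det_mul, Matrix.det_transpose] at h
    have : A.det ^ 2 * G.det = 1 * G.det := by ring_nf; linear_combination h
    simpa using mul_right_cancel₀ hGdet this
  have hAdet : A.det ≠ 0 := by
    intro h
    rw [h] at hdet2; simp at hdet2
  have hcard : Fintype.card (Fin n) = n := Fintype.card_fin n
  have hcoeff : A.charpoly.coeff 0 = (-1) ^ n * A.det := by
    have h := Matrix.det_eq_sign_charpoly_coeff A
    rw [hcard] at h
    have hsq : ((-1 : K) ^ n) * ((-1 : K) ^ n) = 1 := by
      rw [← pow_add, ← two_mul, pow_mul]; norm_num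
    calc A.charpoly.coeff 0 = ((-1:K)^n * (-1:K)^n) * A.charpoly.coeff 0 := by rw [hsq, one_mul]
      _ = (-1:K)^n * ((-1:K)^n * A.charpoly.coeff 0) := by ring
      _ = (-1) ^ n * A.det := by rw [← h]
  refine ⟨hdet2, hcoeff, ?_⟩
  rw [Matrix.reverse_charpoly]
  -- Work over K[X]
  set M : Matrix (Fin n) (Fin n) K[X] := A.map C with hM
  set Gc : Matrix (Fin n) (Fin n) K[X] := G.map C with hGc
  have hmap : Mᵀ * Gc * M = Gc := by
    rw [hM, hGc, ← Matrix.transpose_map, ← Matrix.map_mul, ← Matrix.map_mul, hA]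
  have key : (Mᵀ - (X : K[X]) • 1) * (Gc * M) = Gc * (1 - (X : K[X]) • M) := by
    rw [sub_mul, smul_mul_assoc, one_mul, ← mul_assoc, hmap,
      mul_sub, mul_one, mul_smul_comm]
  have hdetGc : Gc.det ≠ 0 := by
    rw [hGc, ← RingHom.mapMatrix_apply, ← RingHom.map_det]
    simpa using hGdet
  have hdetM : M.det = Polynomial.C A.det := by
    rw [hM, ← RingHom.mapMatrix_apply, ← RingHom.map_det]
  have hdetkey := congrArg Matrix.det key
  rw [Matrix.det_mul, Matrix.det_mul, Matrix.det_mul] at hdetkey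
  have h1 : (Mᵀ - (X : K[X]) • 1).det = (-1) ^ n * Aᵀ.charpoly := by
    have : Mᵀ - (X : K[X]) • 1 = -(charmatrix Aᵀ) := by
      rw [Matrix.charmatrix]
      ext i j
      simp [Matrix.scalar, hM, Matrix.transpose_map, Matrix.smul_apply,
        Matrix.one_apply, Matrix.diagonal_apply, Matrix.sub_apply]
    rw [this, Matrix.det_neg, Fintype.card_fin, Matrix.charpoly]
  have h2 : (1 - (X : K[X]) • M).det = A.charpolyRev := rfl
  rw [h1, h2, hdetM, charpoly_transpose'] at hdetkey
  -- hdetkey : (-1)^n * charpoly A * (Gc.det * C A.det) = Gc.det * charpolyRev A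
  have : Gc.det * ((-1 : K[X]) ^ n * Polynomial.C A.det * A.charpoly)
      = Gc.det * A.charpolyRev := by rw [← hdetkey]; ring
  have := mul_left_cancel₀ hdetGc this
  rw [← this, Polynomial.C_mul, Polynomial.C_pow, map_neg, Polynomial.C_1]
end

section
/- Let K be an algebraically closed field, n a natural number, G an invertible symmetric n×n matrix over K, and A an n×n matrix over K satisfying Aᵀ * G * A = G. Then the number, counted with multiplicity, of roots of the characteristic polynomial of A that are not roots of unity is even. -/
open Polynomial Matrix
open scoped Classical

section MyAux

variable {K : Type*} [Field K] {n : ℕ}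

lemma my_eval_charpoly (M : Matrix (Fin n) (Fin n) K) (x : K) :
    M.charpoly.eval x = (x • (1 : Matrix (Fin n) (Fin n) K) - M).det := by
  rw [Matrix.charpoly, eval_det, matPolyEquiv_charmatrix]
  simp [smul_one_eq_diagonal, Matrix.scalar_apply]

lemma my_charpoly_conj (P M : Matrix (Fin n) (Fin n) K) (hP : IsUnit P.det) :
    (P * M * P⁻¹).charpoly = M.charpoly := by
  have hPP : P * P⁻¹ = 1 := Matrix.mul_nonsing_inv P hP
  have hkey : charmatrix (P * M * P⁻¹) =
      (C : K →+* K[X]).mapMatrix P * charmatrix M * (C : K →+* K[X]).mapMatrix P⁻¹ := by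
    have h1 : ((C : K →+* K[X]).mapMatrix P) * ((C : K →+* K[X]).mapMatrix P⁻¹) = 1 := by
      rw [← _root_.map_mul, hPP, _root_.map_one]
    unfold charmatrix
    rw [Matrix.scalar_apply, ← smul_one_eq_diagonal, mul_sub, sub_mul, Matrix.mul_smul,
      Matrix.smul_mul, mul_one, h1]
    congr 1
    rw [_root_.map_mul, _root_.map_mul]
  have h2 : ((C : K →+* K[X]).mapMatrix P⁻¹ * (C : K →+* K[X]).mapMatrix P).det = 1 := by
    rw [← _root_.map_mul, Matrix.nonsing_inv_mul P hP, _root_.map_one, det_one]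
  unfold Matrix.charpoly
  rw [hkey, det_mul, det_mul, mul_comm, ← mul_assoc, ← det_mul, h2, one_mul]

lemma my_charpoly_transpose (M : Matrix (Fin n) (Fin n) K) :
    Mᵀ.charpoly = M.charpoly := by
  unfold Matrix.charpoly charmatrix
  rw [← Matrix.det_transpose (scalar (Fin n) X - (RingHom.mapMatrix C) M)]
  congr 1
  rw [Matrix.transpose_sub]
  simp [RingHom.mapMatrix_apply, ← Matrix.transpose_map, Matrix.scalar_apply]

lemma my_roots_charpoly_inv [IsAlgClosed K] (M : Matrix (Fin n) (Fin n) K)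
    (hM : IsUnit M.det) :
    (M⁻¹).charpoly.roots = M.charpoly.roots.map (·⁻¹) := by
  set s := M.charpoly.roots with hs
  have hcard : Multiset.card s = n := by
    rw [hs, splits_iff_card_roots.mp (IsAlgClosed.splits M.charpoly),
      Matrix.charpoly_natDegree_eq_dim, Fintype.card_fin]
  have hprod : s.prod = M.det := (Matrix.det_eq_prod_roots_charpoly M).symm
  have hs0 : ∀ a ∈ s, a ≠ (0 : K) := by
    intro a ha h0
    exact hM.ne_zero (by rw [← hprod, Multiset.prod_eq_zero (h0 ▸ ha)])
  have hfact : M.charpoly = (s.map fun a => X - C a).prod :=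
    (IsAlgClosed.splits M.charpoly).eq_prod_roots_of_monic M.charpoly_monic
  suffices h : (M⁻¹).charpoly = ((s.map (·⁻¹)).map fun a => X - C a).prod by
    rw [h, roots_multiset_prod_X_sub_C]
  have hkey : ∀ x : K, x ≠ 0 →
      ((M⁻¹).charpoly - ((s.map (·⁻¹)).map fun a => X - C a).prod).eval x = 0 := by
    intro x hx
    have e1 : (M⁻¹).charpoly.eval x = M.det⁻¹ * ((-x) ^ n * M.charpoly.eval x⁻¹) := by
      rw [my_eval_charpoly]
      have h1 : x • (1 : Matrix (Fin n) (Fin n) K) - M⁻¹ = M⁻¹ * (x • M - 1) := by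
        rw [mul_sub, Matrix.mul_smul, Matrix.nonsing_inv_mul M hM, mul_one]
      have h2 : x • M - 1 = (-x) • (x⁻¹ • (1 : Matrix (Fin n) (Fin n) K) - M) := by
        rw [smul_sub, smul_smul, neg_mul, mul_inv_cancel₀ hx, neg_smul, neg_smul, one_smul]
        abel
      rw [h1, det_mul, h2, Matrix.det_smul, Fintype.card_fin, Matrix.det_nonsing_inv,
        my_eval_charpoly, Ring.inverse_eq_inv]
    have e2 : (((s.map (·⁻¹)).map fun a => X - C a).prod).eval x
        = (s.map fun a => x - a⁻¹).prod := by
      rw [Multiset.map_map, eval_multiset_prod, Multiset.map_map]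
      congr 1
      apply Multiset.map_congr rfl
      intro a _
      simp
    rw [eval_sub, sub_eq_zero, e1, e2, hfact, eval_multiset_prod, Multiset.map_map]
    simp only [Function.comp_apply, eval_sub, eval_X, eval_C]
    have e4 : (s.map fun a => x - a⁻¹).prod = (s.map fun a => a⁻¹ * -x * (x⁻¹ - a)).prod := by
      apply congrArg
      apply Multiset.map_congr rfl
      intro a ha
      have ha0 : a ≠ 0 := hs0 a ha
      field_simp
      ring
    rw [e4, Multiset.prod_map_mul, Multiset.prod_map_mul]
    have e5 : (s.map fun a => a⁻¹).prod = M.det⁻¹ := by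
      rw [← hprod]; exact Multiset.prod_map_inv' s
    have e6 : (s.map fun _ => -x).prod = (-x) ^ n := by
      rw [Multiset.map_const', Multiset.prod_replicate, hcard]
    rw [e5, e6]
    ring
  have hinf : Set.Infinite
      {x : K | IsRoot ((M⁻¹).charpoly - ((s.map (·⁻¹)).map fun a => X - C a).prod) x} := by
    apply Set.Infinite.mono _ ((Set.finite_singleton (0 : K)).infinite_compl)
    intro x hx
    exact hkey x hx
  have hz := Polynomial.eq_zero_of_infinite_isRoot _ hinf
  exact sub_eq_zero.mp hz

lemma my_even_card_of_inv_invariant (t : Multiset K)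
    (h : t.map (fun a : K => a⁻¹) = t) (hfix : ∀ a ∈ t, a⁻¹ ≠ a) :
    Even (Multiset.card t) := by
  induction t using Multiset.strongInductionOn with
  | ih t ih =>
    rcases eq_or_ne t 0 with rfl | hne
    · simp
    · obtain ⟨a, ha⟩ := Multiset.exists_mem_of_ne_zero hne
      have hainv : a⁻¹ ∈ t := by
        rw [← h]; exact Multiset.mem_map_of_mem _ ha
      have hne' : a⁻¹ ≠ a := hfix a ha
      have h1 : a⁻¹ ∈ t.erase a := (Multiset.mem_erase_of_ne hne').mpr hainv
      set t' := (t.erase a).erase a⁻¹ with ht'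
      have ht : t = a ::ₘ a⁻¹ ::ₘ t' := by
        rw [ht', Multiset.cons_erase h1, Multiset.cons_erase ha]
      have hlt : t' < t := by
        rw [ht]
        exact lt_trans (Multiset.lt_cons_self _ _) (Multiset.lt_cons_self _ _)
      have hmem : ∀ b ∈ t', b ∈ t := fun b hb =>
        Multiset.mem_of_mem_erase (Multiset.mem_of_mem_erase hb)
      have hmap : t'.map (fun a : K => a⁻¹) = t' := by
        rw [ht', Multiset.map_erase _ inv_injective, Multiset.map_erase _ inv_injective,
          h, inv_inv, Multiset.erase_comm]
      have heven := ih t' hlt hmap (fun b hb => hfix b (hmem b hb))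
      rw [ht]
      simp only [Multiset.card_cons]
      rcases heven with ⟨m, hm⟩
      exact ⟨m + 1, by omega⟩

end MyAux

/-- Over an algebraically closed field, if `A` preserves a nondegenerate symmetric
bilinear form with Gram matrix `G`, then the number of roots of `charpoly A`
(counted with multiplicity) that are not roots of unity is even. -/
theorem even_card_charpoly_roots_not_rootOfUnity_of_preserves_form
    {K : Type*} [Field K] [IsAlgClosed K] {n : ℕ}
    (G A : Matrix (Fin n) (Fin n) K)
    (hG : IsUnit G) (hGsymm : Gᵀ = G)
    (hA : Aᵀ * G * A = G) :
    Even (Multiset.card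
      (A.charpoly.roots.filter fun α => ¬ ∃ k : ℕ, 0 < k ∧ α ^ k = 1)) := by
  have hdetG : IsUnit G.det := (Matrix.isUnit_iff_isUnit_det G).mp hG
  have hG0 : G.det ≠ 0 := hdetG.ne_zero
  have hdetA : IsUnit A.det := by
    have h := congrArg Matrix.det hA
    rw [det_mul, det_mul, Matrix.det_transpose] at h
    have h3 : (A.det * A.det) * G.det = 1 * G.det := by rw [one_mul]; linear_combination h
    exact IsUnit.of_mul_eq_one _ (mul_right_cancel₀ hG0 h3)
  have hAinv1 : Aᵀ * G = G * A⁻¹ := by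
    calc Aᵀ * G = Aᵀ * G * A * A⁻¹ := by
          rw [mul_assoc (Aᵀ * G) A A⁻¹, Matrix.mul_nonsing_inv A hdetA, mul_one]
    _ = G * A⁻¹ := by rw [hA]
  have hAT : Aᵀ = G * A⁻¹ * G⁻¹ := by
    calc Aᵀ = Aᵀ * G * G⁻¹ := by
          rw [mul_assoc, Matrix.mul_nonsing_inv G hdetG, mul_one]
    _ = G * A⁻¹ * G⁻¹ := by rw [hAinv1]
  have hcp : A.charpoly = (A⁻¹).charpoly := by
    rw [← my_charpoly_transpose A, hAT, my_charpoly_conj G A⁻¹ hdetG]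
  set s := A.charpoly.roots with hs
  have hmap : s.map (fun a : K => a⁻¹) = s := by
    rw [hs, ← my_roots_charpoly_inv A hdetA, ← hcp]
  set p := fun α : K => ¬ ∃ k : ℕ, 0 < k ∧ α ^ k = 1 with hp
  have hpinv : ∀ a : K, p a⁻¹ ↔ p a := by
    intro a
    have hk : ∀ k : ℕ, (a⁻¹) ^ k = 1 ↔ a ^ k = 1 := by
      intro k; rw [inv_pow, inv_eq_one]
    simp only [hp, hk]
  have hfilter : (s.filter p).map (fun a : K => a⁻¹) = s.filter p := by
    conv_rhs => rw [← hmap]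
    rw [Multiset.filter_map]
    congr 1
    apply Multiset.filter_congr
    intro a _
    exact (hpinv a).symm
  have hfix : ∀ a ∈ s.filter p, a⁻¹ ≠ a := by
    intro a ha heq
    have has : a ∈ s := (Multiset.mem_filter.mp ha).1
    have hpa : p a := (Multiset.mem_filter.mp ha).2
    have ha0 : a ≠ 0 := by
      intro h0
      have hpr : s.prod = A.det := (Matrix.det_eq_prod_roots_charpoly A).symm
      exact hdetA.ne_zero (by rw [← hpr, Multiset.prod_eq_zero (h0 ▸ has)])
    exact hpa ⟨2, two_pos, by rw [sq]; nth_rewrite 2 [← heq]; exact mul_inv_cancel₀ ha0⟩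
  exact my_even_card_of_inv_invariant _ hfilter hfix
end

section
/- Let K be an algebraically closed field, n a natural number, G an invertible symmetric n×n matrix over K, and A an n×n matrix over K satisfying Aᵀ * G * A = G. Then the number, counted with multiplicity, of roots of the characteristic polynomial of A that are roots of unity different from 1 and −1 is even. -/
open Polynomial Matrix
open scoped Classical

/-- If a multiset is invariant under a fixed-point-free involution, its cardinality is even. -/
private lemma aux_even_card {α : Type*} [DecidableEq α] (f : α → α)
    (hinv : Function.Involutive f) :
    ∀ S : Multiset α, S.map f = S → (∀ a ∈ S, f a ≠ a) → Even (Multiset.card S) := by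
  intro S
  induction S using Multiset.strongInductionOn with
  | ih S ih =>
    intro hmap hfix
    rcases Multiset.empty_or_exists_mem S with h | ⟨a, ha⟩
    · simp [h]
    · have hfa : f a ∈ S := by
        have h0 : f a ∈ S.map f := Multiset.mem_map_of_mem f ha
        rwa [hmap] at h0
      have hne : f a ≠ a := hfix a ha
      obtain ⟨S₁, rfl⟩ := Multiset.exists_cons_of_mem ha
      have hfa1 : f a ∈ S₁ := by
        rcases Multiset.mem_cons.mp hfa with h | h
        · exact absurd h hne
        · exact h
      obtain ⟨S₂, rfl⟩ := Multiset.exists_cons_of_mem hfa1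
      have hmap2 : S₂.map f = S₂ := by
        have h1 : f a ::ₘ a ::ₘ S₂.map f = a ::ₘ f a ::ₘ S₂ := by
          simpa [hinv a] using hmap
        rw [Multiset.cons_swap] at h1
        exact (Multiset.cons_inj_right _).mp ((Multiset.cons_inj_right _).mp h1)
      have hlt : S₂ < a ::ₘ f a ::ₘ S₂ :=
        (Multiset.lt_cons_self S₂ (f a)).trans (Multiset.lt_cons_self _ a)
      have hfix2 : ∀ b ∈ S₂, f b ≠ b := fun b hb =>
        hfix b (Multiset.mem_cons_of_mem (Multiset.mem_cons_of_mem hb))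
      have hev := ih S₂ hlt hmap2 hfix2
      have hcard : Multiset.card (a ::ₘ f a ::ₘ S₂) = Multiset.card S₂ + 2 := by
        simp
      rw [hcard]
      exact hev.add even_two

/-- Evaluation of the characteristic polynomial. -/
private lemma aux_eval_charpoly {K : Type*} [CommRing K] {n : ℕ}
    (M : Matrix (Fin n) (Fin n) K) (x : K) :
    eval x M.charpoly = (x • (1 : Matrix (Fin n) (Fin n) K) - M).det := by
  rw [Matrix.charpoly, ← coe_evalRingHom, RingHom.map_det]
  congr 1
  ext i j
  by_cases h : i = j
  · subst h
    simp [charmatrix_apply_eq, Matrix.sub_apply, Matrix.smul_apply, Matrix.one_apply]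
  · simp [charmatrix_apply_ne _ _ _ h, Matrix.sub_apply, Matrix.smul_apply,
      Matrix.one_apply_ne h]

/-- Over an algebraically closed field, if `A` preserves a nondegenerate symmetric
bilinear form with Gram matrix `G`, then the number of roots of `charpoly A`
(counted with multiplicity) that are roots of unity different from `1` and `-1`
is even. -/
theorem even_card_charpoly_roots_rootOfUnity_ne_one_neg_one_of_preserves_form
    {K : Type*} [Field K] [IsAlgClosed K] {n : ℕ}
    (G A : Matrix (Fin n) (Fin n) K)
    (hG : IsUnit G) (hGsymm : Gᵀ = G)
    (hA : Aᵀ * G * A = G) :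
    Even (Multiset.card
      (A.charpoly.roots.filter fun α =>
        (∃ k : ℕ, 0 < k ∧ α ^ k = 1) ∧ α ≠ 1 ∧ α ≠ -1)) := by
  classical
  set p := A.charpoly with hp
  have hmon : p.Monic := A.charpoly_monic
  have hsplit : p.Splits := IsAlgClosed.splits p
  set R := p.roots with hRdef
  -- determinants are nonzero
  have hGd : G.det ≠ 0 := ((Matrix.isUnit_iff_isUnit_det G).mp hG).ne_zero
  have hAd : A.det ≠ 0 := by
    have h1 : A.det * G.det * A.det = G.det := by
      have h2 := congrArg Matrix.det hA
      simpa [Matrix.det_mul, Matrix.det_transpose] using h2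
    intro h0
    rw [h0, zero_mul, zero_mul] at h1
    exact hGd h1.symm
  have hAunit : IsUnit A.det := isUnit_iff_ne_zero.mpr hAd
  have hGunit : IsUnit G.det := isUnit_iff_ne_zero.mpr hGd
  have hAleft : A⁻¹ * A = 1 := Matrix.nonsing_inv_mul A hAunit
  have hAright : A * A⁻¹ = 1 := Matrix.mul_nonsing_inv A hAunit
  have hGleft : G⁻¹ * G = 1 := Matrix.nonsing_inv_mul G hGunit
  -- A⁻¹ is conjugate to Aᵀ
  have hconj : A⁻¹ = G⁻¹ * Aᵀ * G := by
    have h1 : Aᵀ * G = G * A⁻¹ := by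
      calc Aᵀ * G = Aᵀ * G * (A * A⁻¹) := by rw [hAright, mul_one]
        _ = (Aᵀ * G * A) * A⁻¹ := by rw [mul_assoc, mul_assoc, mul_assoc]
        _ = G * A⁻¹ := by rw [hA]
    calc A⁻¹ = (G⁻¹ * G) * A⁻¹ := by rw [hGleft, one_mul]
      _ = G⁻¹ * (Aᵀ * G) := by rw [mul_assoc, ← h1]
      _ = G⁻¹ * Aᵀ * G := by rw [mul_assoc]
  have hdetGG : G⁻¹.det * G.det = 1 := by
    have := congrArg Matrix.det hGleft
    simpa [Matrix.det_mul] using this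
  -- the key determinant identity
  have hdetinv : ∀ x : K,
      (x • (1 : Matrix (Fin n) (Fin n) K) - A⁻¹).det
        = (x • (1 : Matrix (Fin n) (Fin n) K) - A).det := by
    intro x
    have h2 : x • (1 : Matrix (Fin n) (Fin n) K) - A⁻¹
        = G⁻¹ * (x • (1 : Matrix (Fin n) (Fin n) K) - Aᵀ) * G := by
      rw [hconj, Matrix.mul_sub, Matrix.sub_mul, Matrix.mul_smul, mul_one,
        Matrix.smul_mul, hGleft]
    have h3 : x • (1 : Matrix (Fin n) (Fin n) K) - Aᵀ
        = (x • (1 : Matrix (Fin n) (Fin n) K) - A)ᵀ := by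
      rw [Matrix.transpose_sub, Matrix.transpose_smul, Matrix.transpose_one]
    rw [h2, Matrix.det_mul, Matrix.det_mul, h3, Matrix.det_transpose]
    ring_nf
    rw [mul_comm] at hdetGG
    calc G⁻¹.det * (x • (1 : Matrix (Fin n) (Fin n) K) - A).det * G.det
        = (G.det * G⁻¹.det) * (x • (1 : Matrix (Fin n) (Fin n) K) - A).det := by ring
      _ = (x • (1 : Matrix (Fin n) (Fin n) K) - A).det := by rw [hdetGG, one_mul]
  -- basic facts about the roots
  have hdetprod : A.det = R.prod := Matrix.det_eq_prod_roots_charpoly A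
  have hRne : ∀ a ∈ R, a ≠ 0 := by
    intro a haR h0
    exact hAd (by rw [hdetprod]; exact Multiset.prod_eq_zero (h0 ▸ haR))
  have hcardR : Multiset.card R = n := by
    rw [hRdef, (Polynomial.splits_iff_card_roots.mp hsplit), hp,
      Matrix.charpoly_natDegree_eq_dim, Fintype.card_fin]
  have hpfac : p = (R.map fun a => X - C a).prod :=
    hsplit.eq_prod_roots_of_monic hmon
  have hdetAinv : A⁻¹.det = R.prod⁻¹ := by
    rw [Matrix.det_nonsing_inv, Ring.inverse_eq_inv', hdetprod]
  -- the key polynomial identity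
  have hq : ((R.map fun a => a⁻¹).map fun a => X - C a).prod = p := by
    apply eq_of_infinite_eval_eq
    apply Set.Infinite.mono (s := ({0} : Set K)ᶜ)
    · intro x hx
      have hx0 : x ≠ 0 := hx
      -- evaluate the left-hand side
      have hle : ∀ (s : Multiset K),
          eval x ((s.map fun a => X - C a).prod) = (s.map fun a => x - a).prod := by
        intro s
        rw [Polynomial.eval_multiset_prod, Multiset.map_map]
        simp [Function.comp]
      have hL : eval x (((R.map fun a => a⁻¹).map fun a => X - C a).prod)
          = (R.map fun a => x - a⁻¹).prod := by
        rw [hle, Multiset.map_map]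
        rfl
      -- evaluate the right-hand side
      have hR1 : eval x p = (x • (1 : Matrix (Fin n) (Fin n) K) - A⁻¹).det := by
        rw [hp, aux_eval_charpoly, hdetinv]
      have e1 : x • (1 : Matrix (Fin n) (Fin n) K) - A⁻¹ = A⁻¹ * (x • A - 1) := by
        rw [Matrix.mul_sub, Matrix.mul_smul, hAleft, mul_one]
      have e2 : x • A - (1 : Matrix (Fin n) (Fin n) K)
          = (-x) • (x⁻¹ • (1 : Matrix (Fin n) (Fin n) K) - A) := by
        rw [smul_sub, smul_smul]
        have : -x * x⁻¹ = -1 := by field_simp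
        rw [this, neg_smul, neg_smul, one_smul, sub_neg_eq_add, neg_add_eq_sub]
      have e3 : (x⁻¹ • (1 : Matrix (Fin n) (Fin n) K) - A).det
          = (R.map fun a => x⁻¹ - a).prod := by
        rw [← aux_eval_charpoly, ← hp]
        conv_lhs => rw [hpfac]
        rw [Polynomial.eval_multiset_prod, Multiset.map_map]
        simp
      have hR2 : eval x p = R.prod⁻¹ * ((-x) ^ n * (R.map fun a => x⁻¹ - a).prod) := by
        rw [hR1, e1, Matrix.det_mul, hdetAinv, e2, Matrix.det_smul, Fintype.card_fin, e3]
      -- now compute the left-hand product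
      have hsplit' : (R.map fun a => x - a⁻¹).prod
          = R.prod⁻¹ * ((-x) ^ n * (R.map fun a => x⁻¹ - a).prod) := by
        have hcongr : (R.map fun a => x - a⁻¹)
            = R.map fun a => a⁻¹ * ((-x) * (x⁻¹ - a)) := by
          apply Multiset.map_congr rfl
          intro a haR
          have ha0 : a ≠ 0 := hRne a haR
          field_simp
          ring
        rw [hcongr]
        have hmm : (R.map fun a => a⁻¹ * ((-x) * (x⁻¹ - a))).prod
            = (R.map fun a => a⁻¹).prod * (R.map fun a => (-x) * (x⁻¹ - a)).prod :=
          Multiset.prod_map_mul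
        have hmm2 : (R.map fun a => (-x) * (x⁻¹ - a)).prod
            = (R.map fun _ => -x).prod * (R.map fun a => x⁻¹ - a).prod :=
          Multiset.prod_map_mul
        rw [hmm, hmm2, Multiset.map_const', Multiset.prod_replicate, hcardR,
          Multiset.prod_map_inv']
      rw [Set.mem_setOf_eq, hL, hR2, hsplit']
    · exact (Set.finite_singleton 0).infinite_compl
  -- hence the roots are invariant under inversion
  have hRinv : R.map (fun a => a⁻¹) = R := by
    have h1 := roots_multiset_prod_X_sub_C (R.map fun a => a⁻¹)
    rw [hq] at h1
    exact h1.symm.trans hRdef.symm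
  -- the predicate is invariant under inversion
  set P : K → Prop := fun α => (∃ k : ℕ, 0 < k ∧ α ^ k = 1) ∧ α ≠ 1 ∧ α ≠ -1 with hPdef
  have hkey : ∀ a : K, P a → P a⁻¹ := by
    rintro a ⟨⟨k, hk, hak⟩, h1, h2⟩
    refine ⟨⟨k, hk, by rw [inv_pow, hak, inv_one]⟩, ?_, ?_⟩
    · intro h
      apply h1
      have := congrArg Inv.inv h
      rwa [inv_inv, inv_one] at this
    · intro h
      apply h2
      have := congrArg Inv.inv h
      rw [inv_inv] at this
      rw [this, inv_neg, inv_one]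
  have hPinv : ∀ a : K, P a⁻¹ ↔ P a := by
    intro a
    exact ⟨fun h => by simpa [inv_inv] using hkey _ h, hkey a⟩
  -- the filtered multiset is invariant under inversion
  have hSmap : (R.filter P).map (fun a => a⁻¹) = R.filter P := by
    conv_rhs => rw [← hRinv]
    rw [Multiset.filter_map]
    congr 1
    apply Multiset.filter_congr
    intro a _
    exact (hPinv a).symm
  -- inversion has no fixed point on the filtered multiset
  have hfix : ∀ a ∈ R.filter P, a⁻¹ ≠ a := by
    intro a haS hinv
    have haP : P a := Multiset.of_mem_filter haS
    obtain ⟨⟨k, hk, hak⟩, h1, h2⟩ := haP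
    have ha0 : a ≠ 0 := by
      intro h0
      rw [h0, zero_pow hk.ne'] at hak
      exact zero_ne_one hak
    have : a * a = 1 := by
      have h3 := mul_inv_cancel₀ ha0
      rwa [hinv] at h3
    rcases mul_self_eq_one_iff.mp this with h | h
    · exact h1 h
    · exact h2 h
  exact aux_even_card (fun a : K => a⁻¹) inv_inv (R.filter P) hSmap hfix
end
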